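/- Corollary to Theorems 2 and 3 (dissipation bound in terms of model length scale and model fluctuation scale): Let F, U, L, ν, C, μ, a_l, U'_m > 0 and 0 < β < 1, and set Re = LU/ν. Let e, y, n : (0,∞) → ℝ be nonnegative bounded functions with limsup_{T→∞} y(T) = U² and N := limsup_{T→∞} n(T) < ∞, satisfying for every T > 0: (i) e(T) ≤ C/T + F·√(y(T)); and (ii) F² ≤ C/T + (F/L)·y(T) + (β/2)(F/U)·e(T) + (1/β)·U F ν/L² + (1/(2β))·(U F/L²)·n(T). Assume in addition that N ≤ μ · a_l · U'_m. Then limsup_{T→∞} e(T) ≤ ( 2/(2−β) + (2/(β(2−β)))·Re^{-1} + (1/(β(2−β)))·μ·(a_l/L)·(U'_m/U) ) · U³/L. -/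

import Mathlib

open Filter

set_option maxHeartbeats 1000000

/-- Corollary to Theorems 2 and 3: dissipation bound in terms of the average
model length scale `a_l = avg(l)` and the modeled fluctuation scale
`U'_m = U'_model`.  Under the hypotheses of Theorem 2 and the additional bound
`N = avg(ν_turb) ≤ μ a_l U'_m` (the conclusion of Theorem 3), one has
`limsup e ≤ (2/(2−β) + (2/(β(2−β))) Re⁻¹ + (1/(β(2−β))) μ (a_l/L)(U'_m/U)) U³/L`. -/
theorem eddy_viscosity_dissipation_bound_corollary
    (F U L ν C β Re N μc a_l U'm : ℝ)
    (hF : 0 < F) (hU : 0 < U) (hL : 0 < L) (hν : 0 < ν) (hC : 0 < C)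
    (hμc : 0 < μc) (hal : 0 < a_l) (hUm : 0 < U'm)
    (hβ0 : 0 < β) (hβ1 : β < 1) (hRe : Re = L * U / ν)
    (e y n : ℝ → ℝ)
    (he0 : ∀ T, 0 ≤ e T) (hy0 : ∀ T, 0 ≤ y T) (hn0 : ∀ T, 0 ≤ n T)
    (heb : ∃ M, ∀ T, e T ≤ M) (hyb : ∃ M, ∀ T, y T ≤ M) (hnb : ∃ M, ∀ T, n T ≤ M)
    (hy : Filter.limsup y Filter.atTop = U ^ 2)
    (hN : N = Filter.limsup n Filter.atTop)
    (hNle : N ≤ μc * a_l * U'm)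
    (hi : ∀ T : ℝ, 0 < T → e T ≤ C / T + F * Real.sqrt (y T))
    (hii : ∀ T : ℝ, 0 < T →
      F ^ 2 ≤ C / T + (F / L) * y T + (β / 2) * (F / U) * e T +
        (1 / β) * (U * F * ν / L ^ 2) + (1 / (2 * β)) * (U * F / L ^ 2) * n T) :
    Filter.limsup e Filter.atTop ≤
      (2 / (2 - β) + (2 / (β * (2 - β))) * Re⁻¹ +
        (1 / (β * (2 - β))) * (μc * (a_l / L) * (U'm / U))) * (U ^ 3 / L) := by
  have hL0 : L ≠ 0 := hL.ne'
  have hU0 : U ≠ 0 := hU.ne'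
  have hν0 : ν ≠ 0 := hν.ne'
  have hβ0' : β ≠ 0 := hβ0.ne'
  have h2β : (0:ℝ) < 2 - β := by linarith
  have h2β0 : (2 - β) ≠ 0 := h2β.ne'
  obtain ⟨Me, hMe⟩ := heb
  obtain ⟨My, hMy⟩ := hyb
  obtain ⟨Mn, hMn⟩ := hnb
  have hbe : IsBoundedUnder (· ≤ ·) atTop e := isBoundedUnder_of ⟨Me, fun T => hMe T⟩
  have hby : IsBoundedUnder (· ≤ ·) atTop y := isBoundedUnder_of ⟨My, fun T => hMy T⟩
  have hbn : IsBoundedUnder (· ≤ ·) atTop n := isBoundedUnder_of ⟨Mn, fun T => hMn T⟩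
  have hce : IsCoboundedUnder (· ≤ ·) (atTop : Filter ℝ) e :=
    IsBoundedUnder.isCoboundedUnder_le (isBoundedUnder_of ⟨0, fun T => he0 T⟩)
  set E := limsup e atTop with hE
  -- Step A : E ≤ F * U
  have hA : E ≤ F * U := by
    apply le_of_forall_pos_le_add
    intro ε hε
    have hev1 : ∀ᶠ T in (atTop : Filter ℝ), y T < U ^ 2 + ε * U / F := by
      apply eventually_lt_of_limsup_lt _ hby
      rw [hy]
      have : 0 < ε * U / F := by positivity
      linarith
    rw [eventually_atTop] at hev1
    obtain ⟨t₀, ht₀⟩ := hev1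
    have hev : ∀ᶠ T in (atTop : Filter ℝ), e T ≤ F * U + ε := by
      rw [eventually_atTop]
      refine ⟨max (max t₀ 1) (2 * C / ε), fun T hT => ?_⟩
      have hT1 : (1:ℝ) ≤ T := le_trans ((le_max_right t₀ 1).trans (le_max_left _ _)) hT
      have hT0 : 0 < T := lt_of_lt_of_le one_pos hT1
      have hCT : C / T ≤ ε / 2 := by
        rw [div_le_iff₀ hT0]
        have h2 : 2 * C / ε ≤ T := le_trans (le_max_right _ _) hT
        calc C = ε / 2 * (2 * C / ε) := by field_simp
          _ ≤ ε / 2 * T := by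
              exact mul_le_mul_of_nonneg_left h2 (by positivity)
      have hyT : y T ≤ (U + ε / (2 * F)) ^ 2 := by
        have hTt : t₀ ≤ T := le_trans ((le_max_left t₀ 1).trans (le_max_left _ _)) hT
        have h1 := ht₀ T hTt
        have h2 : (0:ℝ) ≤ (ε / (2 * F)) ^ 2 := by positivity
        have h3 : (U + ε / (2 * F)) ^ 2 = U ^ 2 + ε * U / F + (ε / (2 * F)) ^ 2 := by
          field_simp
          ring
        linarith
      have hsqrt : Real.sqrt (y T) ≤ U + ε / (2 * F) := by
        have h := Real.sqrt_le_sqrt hyT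
        rwa [Real.sqrt_sq (by positivity)] at h
      have hFs : F * Real.sqrt (y T) ≤ F * U + ε / 2 := by
        have h1 := mul_le_mul_of_nonneg_left hsqrt hF.le
        have h2 : F * (U + ε / (2 * F)) = F * U + ε / 2 := by
          field_simp
        linarith
      have := hi T hT0
      linarith
    exact limsup_le_of_le hce hev
  -- Step B : limiting form of (ii)
  have hB : F ^ 2 ≤ (F / L) * U ^ 2 + (β / 2) * (F / U) * E +
      (1 / β) * (U * F * ν / L ^ 2) + (1 / (2 * β)) * (U * F / L ^ 2) * N := by
    have key : ∀ ε > (0:ℝ), F ^ 2 ≤ (F / L) * U ^ 2 + (β / 2) * (F / U) * E +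
        (1 / β) * (U * F * ν / L ^ 2) + (1 / (2 * β)) * (U * F / L ^ 2) * N +
        (1 + F / L + (β / 2) * (F / U) + (1 / (2 * β)) * (U * F / L ^ 2)) * ε := by
      intro ε hε
      have hev1 : ∀ᶠ T in (atTop : Filter ℝ), y T < U ^ 2 + ε :=
        eventually_lt_of_limsup_lt (by rw [hy]; linarith) hby
      have hev2 : ∀ᶠ T in (atTop : Filter ℝ), e T < E + ε :=
        eventually_lt_of_limsup_lt (by linarith) hbe
      have hev3 : ∀ᶠ T in (atTop : Filter ℝ), n T < N + ε :=
        eventually_lt_of_limsup_lt (by rw [← hN]; linarith) hbn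
      have hev := (hev1.and hev2).and hev3
      rw [eventually_atTop] at hev
      obtain ⟨t₀, ht₀⟩ := hev
      set T := max (max t₀ 1) (C / ε) with hT
      have hT1 : (1:ℝ) ≤ T := (le_max_right t₀ 1).trans (le_max_left _ _)
      have hT0 : 0 < T := lt_of_lt_of_le one_pos hT1
      have hCT : C / T ≤ ε := by
        rw [div_le_iff₀ hT0]
        have h2 : C / ε ≤ T := le_max_right _ _
        calc C = ε * (C / ε) := by field_simp
          _ ≤ ε * T := mul_le_mul_of_nonneg_left h2 hε.le
      obtain ⟨⟨hy', he'⟩, hn'⟩ := ht₀ T ((le_max_left t₀ 1).trans (le_max_left _ _))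
      have h := hii T hT0
      have c1 : (F / L) * y T ≤ (F / L) * (U ^ 2 + ε) :=
        mul_le_mul_of_nonneg_left hy'.le (by positivity)
      have c2 : (β / 2) * (F / U) * e T ≤ (β / 2) * (F / U) * (E + ε) :=
        mul_le_mul_of_nonneg_left he'.le (by positivity)
      have c3 : (1 / (2 * β)) * (U * F / L ^ 2) * n T ≤
          (1 / (2 * β)) * (U * F / L ^ 2) * (N + ε) :=
        mul_le_mul_of_nonneg_left hn'.le (by positivity)
      nlinarith [hCT, c1, c2, c3, h]
    apply le_of_forall_pos_le_add
    intro ε hε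
    have hK : (0:ℝ) < 1 + F / L + (β / 2) * (F / U) + (1 / (2 * β)) * (U * F / L ^ 2) := by
      positivity
    have hk := key (ε / (1 + F / L + (β / 2) * (F / U) + (1 / (2 * β)) * (U * F / L ^ 2)))
      (by positivity)
    have hc : (1 + F / L + (β / 2) * (F / U) + (1 / (2 * β)) * (U * F / L ^ 2)) *
        (ε / (1 + F / L + (β / 2) * (F / U) + (1 / (2 * β)) * (U * F / L ^ 2))) = ε := by
      field_simp
    linarith
  -- multiply by U / F
  have hB' : F * U ≤ U ^ 3 / L + (β / 2) * E + (1 / β) * (U ^ 2 * ν / L ^ 2) +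
      (1 / 2) * (1 / β) * (U ^ 2 / L ^ 2) * N := by
    rw [← mul_le_mul_iff_right₀ hF]
    calc F * (F * U) = U * F ^ 2 := by ring
      _ ≤ U * ((F / L) * U ^ 2 + (β / 2) * (F / U) * E +
          (1 / β) * (U * F * ν / L ^ 2) + (1 / (2 * β)) * (U * F / L ^ 2) * N) :=
        mul_le_mul_of_nonneg_left hB hU.le
      _ = F * (U ^ 3 / L + (β / 2) * E + (1 / β) * (U ^ 2 * ν / L ^ 2) +
          (1 / 2) * (1 / β) * (U ^ 2 / L ^ 2) * N) := by
        field_simp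
  have hNmul : (1 / 2) * (1 / β) * (U ^ 2 / L ^ 2) * N ≤
      (1 / 2) * (1 / β) * (U ^ 2 / L ^ 2) * (μc * a_l * U'm) :=
    mul_le_mul_of_nonneg_left hNle (by positivity)
  have key2 : E * (2 - β) ≤ 2 * (U ^ 3 / L) + 2 * (1 / β) * (U ^ 2 * ν / L ^ 2) +
      (1 / β) * (U ^ 2 / L ^ 2) * (μc * a_l * U'm) := by
    linarith [hA, hB', hNmul]
  rw [hRe, ← mul_le_mul_iff_left₀ h2β]
  calc E * (2 - β) ≤ 2 * (U ^ 3 / L) + 2 * (1 / β) * (U ^ 2 * ν / L ^ 2) +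
      (1 / β) * (U ^ 2 / L ^ 2) * (μc * a_l * U'm) := key2
    _ = (2 / (2 - β) + (2 / (β * (2 - β))) * (L * U / ν)⁻¹ +
        (1 / (β * (2 - β))) * (μc * (a_l / L) * (U'm / U))) * (U ^ 3 / L) * (2 - β) := by
      field_simp
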